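/- Let v_1, …, v_d ∈ ℤ^n be linearly independent. Then ℤ^n ∩ cone_ℝ(v_1,…,v_d) = (ℤ^n ∩ Π(v_1,…,v_d)) + cone_ℤ(v_1,…,v_d); moreover this decomposition is a partition: the translates w + cone_ℤ(v_1,…,v_d), as w ranges over ℤ^n ∩ Π(v_1,…,v_d), are pairwise disjoint. -/

import Mathlib

open scoped Pointwise

/-- The real coordinate vector of an integer vector. -/
def toReal {n : ℕ} (x : Fin n → ℤ) : Fin n → ℝ := fun j => (x j : ℝ)

/-- The set of integer points of `ℝ^n`. -/
def intPts (n : ℕ) : Set (Fin n → ℝ) := Set.range (toReal (n := n))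

/-- The real cone generated by the vectors `v i`: all combinations with nonnegative real
coefficients. -/
def coneR {n d : ℕ} (v : Fin d → (Fin n → ℤ)) : Set (Fin n → ℝ) :=
  {y | ∃ lam : Fin d → ℝ, (∀ i, 0 ≤ lam i) ∧ y = ∑ i, lam i • toReal (v i)}

/-- The discrete cone generated by the vectors `v i`: all combinations with nonnegative
integer coefficients. -/
def coneZ {n d : ℕ} (v : Fin d → (Fin n → ℤ)) : Set (Fin n → ℝ) :=
  {y | ∃ c : Fin d → ℕ, y = ∑ i, (c i : ℝ) • toReal (v i)}

/-- The (half-open) fundamental parallelepiped of the vectors `v i`. -/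
def fundPar {n d : ℕ} (v : Fin d → (Fin n → ℤ)) : Set (Fin n → ℝ) :=
  {y | ∃ lam : Fin d → ℝ, (∀ i, 0 ≤ lam i ∧ lam i < 1) ∧ y = ∑ i, lam i • toReal (v i)}

lemma toReal_sub {n : ℕ} (a b : Fin n → ℤ) : toReal (a - b) = toReal a - toReal b := by
  funext j; simp [toReal]

lemma toReal_add' {n : ℕ} (a b : Fin n → ℤ) : toReal (a + b) = toReal a + toReal b := by
  funext j; simp [toReal]

lemma toReal_int_sum {n d : ℕ} (v : Fin d → (Fin n → ℤ)) (k : Fin d → ℤ) :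
    toReal (∑ i, k i • v i) = ∑ i, (k i : ℝ) • toReal (v i) := by
  funext j
  simp [toReal, Finset.sum_apply]

lemma coeff_uniq {n d : ℕ} {v : Fin d → (Fin n → ℤ)}
    (hli : LinearIndependent ℝ (fun i => toReal (v i)))
    {a b : Fin d → ℝ} (h : ∑ i, a i • toReal (v i) = ∑ i, b i • toReal (v i)) : a = b := by
  have h0 : ∑ i, (a - b) i • toReal (v i) = 0 := by
    simp [sub_smul, Finset.sum_sub_distrib, h]
  have := Fintype.linearIndependent_iff.mp hli (a - b) h0
  funext i
  have := this i
  simpa [sub_eq_zero] using this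

theorem integer_points_in_simplicial_cone
    (n d : ℕ) (v : Fin d → (Fin n → ℤ))
    (hli : LinearIndependent ℝ (fun i => toReal (v i))) :
    intPts n ∩ coneR v = (intPts n ∩ fundPar v) + coneZ v ∧
      Set.PairwiseDisjoint (intPts n ∩ fundPar v) (fun w => {w} + coneZ v) := by
  constructor
  · ext x
    constructor
    · rintro ⟨⟨z, hz⟩, lam, hlam, hx⟩
      set mu : Fin d → ℝ := fun i => Int.fract (lam i) with hmu
      set c : Fin d → ℕ := fun i => (⌊lam i⌋).toNat with hc
      have hcast : ∀ i, (c i : ℝ) = (⌊lam i⌋ : ℝ) := by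
        intro i
        have h := Int.toNat_of_nonneg (Int.floor_nonneg.mpr (hlam i))
        simp only [hc]
        exact_mod_cast h
      have hw_int : ∑ i, mu i • toReal (v i) = toReal (z - ∑ i, ⌊lam i⌋ • v i) := by
        rw [toReal_sub, toReal_int_sum, hz, hx, ← Finset.sum_sub_distrib]
        congr 1; funext i
        rw [← sub_smul]; rfl
      refine ⟨∑ i, mu i • toReal (v i),
        ⟨⟨z - ∑ i, ⌊lam i⌋ • v i, hw_int.symm⟩,
         ⟨mu, fun i => ⟨Int.fract_nonneg _, Int.fract_lt_one _⟩, rfl⟩⟩,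
        ∑ i, (c i : ℝ) • toReal (v i), ⟨c, rfl⟩, ?_⟩
      show (∑ i, mu i • toReal (v i)) + ∑ i, (c i : ℝ) • toReal (v i) = x
      rw [← Finset.sum_add_distrib, hx]
      congr 1; funext i
      rw [hcast i, ← add_smul, hmu]
      congr 1
      exact Int.fract_add_floor (lam i)
    · rintro ⟨w, ⟨⟨z, hz⟩, mu, hmu, hw⟩, y, ⟨c, hcy⟩, rfl⟩
      refine ⟨⟨z + ∑ i, (c i : ℤ) • v i, ?_⟩, fun i => mu i + c i, fun i => add_nonneg (hmu i).1 (Nat.cast_nonneg _), ?_⟩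
      · rw [toReal_add', toReal_int_sum, hz, hcy]
        push_cast
        rfl
      · show (w + y) = _
        rw [hw, hcy, ← Finset.sum_add_distrib]
        congr 1; funext i
        rw [add_smul]
  · rintro x ⟨hxInt, mu, hmu, hx⟩ y ⟨hyInt, nu, hnu, hy⟩ hne
    rw [Function.onFun, Set.disjoint_left]
    rintro p ⟨a, ha, b, ⟨c, hc⟩, hab⟩ ⟨a', ha', b', ⟨c', hc'⟩, hab'⟩
    apply hne
    simp only [Set.mem_singleton_iff] at ha ha'
    subst ha ha'
    have heq : ∑ i, (mu i + c i) • toReal (v i) = ∑ i, (nu i + c' i) • toReal (v i) := by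
      simp only [add_smul, Finset.sum_add_distrib, ← hx, ← hy, ← hc, ← hc']
      exact hab.trans hab'.symm
    have h2 := coeff_uniq hli heq
    have hmn : mu = nu := by
      funext i
      have hi : mu i + c i = nu i + c' i := congrFun h2 i
      have f1 : Int.fract (mu i + (c i : ℝ)) = mu i :=
        by rw [Int.fract_add_natCast, Int.fract_eq_self.mpr ⟨(hmu i).1, (hmu i).2⟩]
      have f2 : Int.fract (nu i + (c' i : ℝ)) = nu i :=
        by rw [Int.fract_add_natCast, Int.fract_eq_self.mpr ⟨(hnu i).1, (hnu i).2⟩]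
      rw [← f1, ← f2, hi]
    rw [hx, hy, hmn]
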